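/- LAY <_W C_N, i.e., C_N × d_MLR is strictly Weihrauch below closed choice on the naturals. -/

import Mathlib

/- Common background: type-two computability on Baire space, represented spaces
(representations as functional relations), Weihrauch reducibility, Cantor space,
Martin-Löf tests, Martin-Löf randomness, and the basic multivalued functions
`C_ℕ`, `d_MLR`, `LAY`, the layer map and layerwise computability. -/

namespace WL

abbrev Baire : Type := ℕ → ℕ
abbrev Cantor : Type := ℕ → Bool

/-- The initial segment of length `m` of a point of Baire space. -/
def initSeg (p : Baire) (m : ℕ) : List ℕ := (List.range m).map p

/-- `l` is a prefix of the sequence `p`. -/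
def PrefixOfFun (l : List ℕ) (p : Baire) : Prop := ∀ i : Fin l.length, l.get i = p i

/-- `F` is a computable (partial) function on Baire space, with domain (at least) `D`:
there is a computable monotone word function producing, on longer and longer prefixes of
an input `p ∈ D`, longer and longer prefixes of `F p`. -/
def ComputableOn (F : Baire → Baire) (D : Set Baire) : Prop :=
  ∃ φ : List ℕ → List ℕ, Computable φ ∧ (∀ l l' : List ℕ, l <+: l' → φ l <+: φ l') ∧
    ∀ p ∈ D, (∀ m, PrefixOfFun (φ (initSeg p m)) (F p)) ∧
      ∀ n, ∃ m, n ≤ (φ (initSeg p m)).length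

/-- Pairing on Baire space. -/
def pairB (p q : Baire) : Baire := fun n => if n % 2 = 0 then p (n / 2) else q (n / 2)

def evens (p : Baire) : Baire := fun n => p (2 * n)

def odds (p : Baire) : Baire := fun n => p (2 * n + 1)

/-- `F` is a realizer of the multivalued function `f`, w.r.t. representations
`δX`, `δY` (given as functional relations between names and points). -/
def Realizes {X Y : Type} (δX : Baire → X → Prop) (δY : Baire → Y → Prop)
    (f : X → Set Y) (F : Baire → Baire) : Prop :=
  ∀ p x, δX p x → (f x).Nonempty → ∃ y, δY (F p) y ∧ y ∈ f x

/-- The names of points in the domain of the multivalued function `f`. -/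
def domNames {X Y : Type} (δX : Baire → X → Prop) (f : X → Set Y) : Set Baire :=
  {p | ∃ x, δX p x ∧ (f x).Nonempty}

/-- Weihrauch reducibility `f ≤_W g`. -/
def WRed {X Y Z W : Type} (δX : Baire → X → Prop) (δY : Baire → Y → Prop)
    (δZ : Baire → Z → Prop) (δW : Baire → W → Prop)
    (f : X → Set Y) (g : Z → Set W) : Prop :=
  ∃ H K : Baire → Baire, ComputableOn H (domNames δX f) ∧
    ∀ G : Baire → Baire, Realizes δZ δW g G →
      ComputableOn K {r | ∃ p ∈ domNames δX f, r = pairB p (G (H p))} ∧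
      Realizes δX δY f fun p => K (pairB p (G (H p)))

/-- Weihrauch equivalence. -/
def WEquiv {X Y Z W : Type} (δX : Baire → X → Prop) (δY : Baire → Y → Prop)
    (δZ : Baire → Z → Prop) (δW : Baire → W → Prop)
    (f : X → Set Y) (g : Z → Set W) : Prop :=
  WRed δX δY δZ δW f g ∧ WRed δZ δW δX δY g f

/-- The multivalued function `f` is computable. -/
def ComputableMF {X Y : Type} (δX : Baire → X → Prop) (δY : Baire → Y → Prop)
    (f : X → Set Y) : Prop :=
  ∃ F : Baire → Baire, ComputableOn F (domNames δX f) ∧ Realizes δX δY f F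

/-- Representation of `ℕ`. -/
def repNat : Baire → ℕ → Prop := fun p n => p 0 = n

/-- Representation of Baire space. -/
def repBaire : Baire → Baire → Prop := fun p q => p = q

/-- Representation of Cantor space. -/
def repCantor : Baire → Cantor → Prop := fun p x => ∀ n, p n = if x n then 1 else 0

/-- Representation of closed subsets of `ℕ` by enumerations of their complements. -/
def repClosedNat : Baire → Set ℕ → Prop := fun p A => ∀ n, n ∈ A ↔ ¬ ∃ i, p i = n + 1

/-- Representation of open subsets of `ℕ` by enumerations. -/
def repOpenNat : Baire → Set ℕ → Prop := fun p A => ∀ n, n ∈ A ↔ ∃ i, p i = n + 1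

/-- Product representation. -/
def prodRep {X Z : Type} (δX : Baire → X → Prop) (δZ : Baire → Z → Prop) :
    Baire → X × Z → Prop := fun p xz => δX (evens p) xz.1 ∧ δZ (odds p) xz.2

/-- Representation of countable powers. -/
def seqRep {X : Type} (δX : Baire → X → Prop) : Baire → (ℕ → X) → Prop :=
  fun p xs => ∀ i, δX (fun n => p (Nat.pair i n)) (xs i)

/-- Product of multivalued functions. -/
def prodMF {X Y Z W : Type} (f : X → Set Y) (g : Z → Set W) : X × Z → Set (Y × W) :=
  fun xz => f xz.1 ×ˢ g xz.2

/-- Composition of multivalued functions (with the usual domain condition). -/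
def compMF {X Y Z : Type} (g : Y → Set Z) (f : X → Set Y) : X → Set Z :=
  fun x => {z | (∀ y ∈ f x, (g y).Nonempty) ∧ ∃ y ∈ f x, z ∈ g y}

/-- The cylinder of a finite binary word. -/
def cyl (w : List Bool) : Set Cantor := {x | ∀ i : Fin w.length, x i = w.get i}

/-- Decoding a natural number as a finite binary word. -/
def wordOf (k : ℕ) : List Bool := (Encodable.decode (α := List Bool) k).getD []

/-- The open subset of Cantor space enumerated by `p` (as a union of cylinders). -/
def openOf (p : Baire) : Set Cantor :=
  ⋃ i, if p i = 0 then (∅ : Set Cantor) else cyl (wordOf (p i - 1))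

/-- Representation of open subsets of Cantor space. -/
def repOpenCantor : Baire → Set Cantor → Prop := fun p U => U = openOf p

/-- Representation of closed subsets of Cantor space. -/
def repClosedCantor : Baire → Set Cantor → Prop := fun p A => A = (openOf p)ᶜ

/-- The number of binary words of length `n` whose cylinder is contained in `U`. -/
noncomputable def cylCount (U : Set Cantor) (n : ℕ) : ℕ :=
  Nat.card {w : Fin n → Bool // cyl (List.ofFn w) ⊆ U}

/-- For an open set `U`, `lebLe U i` expresses `λ(U) ≤ 2^{-i}` for the uniform measure. -/
def lebLe (U : Set Cantor) (i : ℕ) : Prop := ∀ n, 2 ^ i * cylCount U n ≤ 2 ^ n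

/-- A Martin-Löf test: a computable sequence of (codes of) open sets `U_i` with
`λ(U_i) ≤ 2^{-i}`. -/
structure MLTest where
  e : ℕ → ℕ → ℕ
  comp : Computable₂ e
  meas : ∀ i, lebLe (openOf (e i)) i

/-- The `i`-th level of a Martin-Löf test. -/
def MLTest.U (T : MLTest) (i : ℕ) : Set Cantor := openOf (T.e i)

/-- Martin-Löf randomness. -/
def MLRandom (x : Cantor) : Prop := ∀ T : MLTest, ∃ i, x ∉ T.U i

/-- A universal Martin-Löf test. -/
def MLTest.Universal (T : MLTest) : Prop := ∀ T' : MLTest, (⋂ i, T'.U i) ⊆ ⋂ i, T.U i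

/-- Closed choice on the naturals, as a multivalued function on `A(ℕ)`. -/
def CN : Set ℕ → Set ℕ := fun A => A

/-- `d_MLR : MLR → {1}`. -/
def dMLR : Cantor → Set ℕ := fun x => {n | MLRandom x ∧ n = 1}

/-- The degree `LAY = C_ℕ × d_MLR`. -/
def LAY : Set ℕ × Cantor → Set (ℕ × ℕ) := prodMF CN dMLR

abbrev repLAYin : Baire → Set ℕ × Cantor → Prop := prodRep repClosedNat repCantor
abbrev repPairNat : Baire → ℕ × ℕ → Prop := prodRep repNat repNat

/-- The layer map of a Martin-Löf test: `n ∈ Lay T x` iff `x ∉ U_n`. -/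
def Lay (T : MLTest) : Cantor → Set ℕ := fun x => {n | MLRandom x ∧ x ∉ T.U n}

/-- The randomness deficiency map: `RD T x = min {n | x ∉ U_n}`. -/
def RD (T : MLTest) : Cantor → Set ℕ := fun x => {n | MLRandom x ∧ IsLeast {m | x ∉ T.U m} n}

/-- `f : MLR ⇉ X` is layerwise computable w.r.t. the test `T`: some computable
`g(p, k)` produces a value in `f p` whenever `p ∉ U_k`. -/
def LayerwiseComputable (T : MLTest) {X : Type} (δX : Baire → X → Prop)
    (f : Cantor → Set X) : Prop :=
  ∃ G : Baire → Baire,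
    ComputableOn G {r | ∃ p x k, repCantor p x ∧ x ∉ T.U k ∧ (f x).Nonempty ∧
      r = pairB p fun _ => k} ∧
    ∀ p x k, repCantor p x → x ∉ T.U k → (f x).Nonempty →
      ∃ y, δX (G (pairB p fun _ => k)) y ∧ y ∈ f x

/-- Layerwise computability for multivalued functions with an additional input. -/
def LayerwiseComputable₂ (T : MLTest) {I X : Type} (δI : Baire → I → Prop)
    (δX : Baire → X → Prop) (f : Cantor × I → Set X) : Prop :=
  ∃ G : Baire → Baire,
    ComputableOn G {r | ∃ p q x i k, repCantor p x ∧ δI q i ∧ x ∉ T.U k ∧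
      (f (x, i)).Nonempty ∧ r = pairB (pairB p q) fun _ => k} ∧
    ∀ p q x i k, repCantor p x → δI q i → x ∉ T.U k → (f (x, i)).Nonempty →
      ∃ y, δX (G (pairB (pairB p q) fun _ => k)) y ∧ y ∈ f (x, i)

/-- `Σ_{i<|w|} (2 w(i) - 1)`: the signed count of a binary word. -/
def signedSum (w : List Bool) : ℤ := (w.count true : ℤ) - (w.count false : ℤ)

/-- The prefix of length `n` of a point of Cantor space. -/
def initBits (x : Cantor) (n : ℕ) : List Bool := List.ofFn fun i : Fin n => x i


/-! ### Auxiliary material for the proof -/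

section Aux

open Classical

/-! #### Basic pairing lemmas -/

lemma pairB_even (a b : Baire) (n : ℕ) : pairB a b (2 * n) = a n := by
  simp only [pairB]
  rw [if_pos (by omega), (by omega : 2 * n / 2 = n)]

lemma pairB_odd (a b : Baire) (n : ℕ) : pairB a b (2 * n + 1) = b n := by
  simp only [pairB]
  rw [if_neg (by omega), (by omega : (2 * n + 1) / 2 = n)]

lemma evens_pairB (a b : Baire) : evens (pairB a b) = a :=
  funext fun n => pairB_even a b n

lemma odds_pairB (a b : Baire) : odds (pairB a b) = b :=
  funext fun n => pairB_odd a b n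

/-! #### initSeg lemmas -/

lemma initSeg_length (p : Baire) (m : ℕ) : (initSeg p m).length = m := by
  simp [initSeg]

lemma initSeg_getD (p : Baire) {m k : ℕ} (h : k < m) : (initSeg p m).getD k 0 = p k := by
  rw [List.getD_eq_getElem _ _ (by simp [initSeg, h])]
  simp [initSeg]

lemma get_map_range {α : Type*} (f : ℕ → α) {M : ℕ}
    (i : Fin (((List.range M).map f).length)) : ((List.range M).map f).get i = f i := by
  simp

lemma map_range_prefix {α : Type*} (f g : ℕ → α) {m m' : ℕ} (h : m ≤ m')
    (he : ∀ i < m, f i = g i) : (List.range m).map f <+: (List.range m').map g := by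
  rw [List.prefix_iff_eq_take]
  apply List.ext_getElem (by simp [h, Nat.min_eq_left]) ?_
  intro k h1 h2
  have hk : k < m := by simpa using h1
  simp [hk, he k hk, Nat.lt_of_lt_of_le hk h]

/-! #### A computable point mapped through a `ComputableOn` function is computable -/

lemma computable_map_range {α : Type*} [Primcodable α] {f : ℕ → α} (hf : Computable f) :
    Computable fun n => (List.range n).map f := by
  have hrec := Computable.nat_rec (f := @id ℕ) (g := fun _ : ℕ => ([] : List α))
      (h := fun _ q => q.2 ++ [f q.1]) Computable.id (Computable.const _)
      ((Computable.list_append.comp (Computable.snd.comp Computable.snd)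
        (Computable.list_cons.comp (hf.comp (Computable.fst.comp Computable.snd))
          (Computable.const []))).to₂)
  have key : ∀ n, (Nat.rec (motive := fun _ => List α) [] (fun y IH => IH ++ [f y]) n)
      = (List.range n).map f := by
    intro n
    induction n with
    | zero => rfl
    | succ n ih =>
        show (Nat.rec (motive := fun _ => List α) [] (fun y IH => IH ++ [f y]) n) ++ [f n] = _
        rw [ih, List.range_succ, List.map_append]
        rfl
  exact hrec.of_eq fun n => key n

lemma computableOn_point {F : Baire → Baire} {D : Set Baire}
    (hF : ComputableOn F D) {p : Baire} (hp : Computable p) (hpD : p ∈ D) :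
    Computable (F p) := by
  obtain ⟨φ, hφc, -, hφd⟩ := hF
  obtain ⟨hpref, htot⟩ := hφd p hpD
  have hseg : Computable fun m => initSeg p m := computable_map_range hp
  have hfc : Computable₂ fun n m => (φ (initSeg p m))[n]? :=
    Computable.list_getElem?.comp (hφc.comp (hseg.comp Computable.snd)) Computable.fst
  have hdom : ∀ n : ℕ, (Nat.rfindOpt fun m => (φ (initSeg p m))[n]?).Dom := by
    intro n
    rcases htot (n + 1) with ⟨m, hm⟩
    exact Nat.rfindOpt_dom.2 ⟨m, _, List.getElem?_eq_getElem (by omega)⟩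
  have hval : ∀ (n : ℕ) a, a ∈ Nat.rfindOpt (fun m => (φ (initSeg p m))[n]?) → a = F p n := by
    intro n a ha
    rcases Nat.rfindOpt_spec ha with ⟨m, hm⟩
    rcases List.getElem?_eq_some_iff.1 hm with ⟨h, hget⟩
    rw [← hget]
    exact hpref m ⟨n, h⟩
  refine (Partrec.rfindOpt hfc).of_eq_tot fun n => ?_
  exact ⟨hdom n, hval n _ (Part.get_mem (hdom n))⟩

/-! #### Computable points of Cantor space are not ML-random -/

lemma initBits_eq_map (x : Cantor) (n : ℕ) : initBits x n = (List.range n).map x := by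
  apply List.ext_getElem (by simp [initBits]) ?_
  intro k h1 h2
  simp [initBits]

lemma length_initBits (x : Cantor) (n : ℕ) : (initBits x n).length = n := by
  simp [initBits]

lemma mem_cyl_initBits (x : Cantor) (i : ℕ) : x ∈ cyl (initBits x i) := by
  intro k
  rw [List.get_eq_getElem]
  simp [initBits]

lemma wordOf_encode (w : List Bool) : wordOf (Encodable.encode w) = w := by
  simp [wordOf, Encodable.encodek]

lemma openOf_const_encode (w : List Bool) :
    openOf (fun _ => Encodable.encode w + 1) = cyl w := by
  have h : ∀ i : ℕ, (if (fun _ : ℕ => Encodable.encode w + 1) i = 0 then (∅ : Set Cantor)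
      else cyl (wordOf ((fun _ : ℕ => Encodable.encode w + 1) i - 1))) = cyl w := by
    intro i
    show (if Encodable.encode w + 1 = 0 then (∅ : Set Cantor)
      else cyl (wordOf (Encodable.encode w + 1 - 1))) = cyl w
    rw [if_neg (Nat.succ_ne_zero _), Nat.add_sub_cancel, wordOf_encode]
  show (⋃ i : ℕ, if (fun _ : ℕ => Encodable.encode w + 1) i = 0 then (∅ : Set Cantor)
      else cyl (wordOf ((fun _ : ℕ => Encodable.encode w + 1) i - 1))) = cyl w
  exact (Set.iUnion_congr h).trans (Set.iUnion_const _)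

/-- Structure of subsets of cylinders. -/
lemma cyl_subset_cyl {n : ℕ} {u : Fin n → Bool} {w : List Bool}
    (h : cyl (List.ofFn u) ⊆ cyl w) :
    w.length ≤ n ∧ ∀ k (hk : k < w.length) (hkn : k < n), u ⟨k, hkn⟩ = w.get ⟨k, hk⟩ := by
  classical
  set y : Cantor := fun j => if hj : j < n then u ⟨j, hj⟩ else !(w.getD j false) with hy
  have hyu : y ∈ cyl (List.ofFn u) := by
    intro idx
    have hidx : (idx : ℕ) < n := by
      have := idx.2
      simpa using this
    simp only [hy, dif_pos hidx, List.get_ofFn]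
    exact congrArg u (Fin.ext rfl)
  have hyw := h hyu
  have hlen : w.length ≤ n := by
    by_contra hc
    push_neg at hc
    have h1 := hyw ⟨n, hc⟩
    simp only [hy, dif_neg (lt_irrefl n)] at h1
    rw [List.getD_eq_getElem _ _ hc] at h1
    simp only [List.get_eq_getElem] at h1
    exact (Bool.not_ne_self _ h1)
  refine ⟨hlen, fun k hk hkn => ?_⟩
  have h1 := hyw ⟨k, hk⟩
  simpa only [hy, dif_pos hkn] using h1

lemma lebLe_cyl (w : List Bool) : lebLe (cyl w) w.length := by
  intro n
  set i := w.length with hi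
  by_cases hn : i ≤ n
  · have hcard : cylCount (cyl w) n ≤ 2 ^ (n - i) := by
      have hinj : Function.Injective
          (fun u : {u : Fin n → Bool // cyl (List.ofFn u) ⊆ cyl w} =>
            (fun j : Fin (n - i) => u.1 ⟨i + j, by omega⟩ : Fin (n - i) → Bool)) := by
        intro u v huv
        apply Subtype.ext
        funext k
        rcases lt_or_ge (k : ℕ) i with hki | hki
        · have hu := (cyl_subset_cyl u.2).2 k hki k.2
          have hv := (cyl_subset_cyl v.2).2 k hki k.2
          rw [show (⟨(k : ℕ), k.2⟩ : Fin n) = k from rfl] at hu hv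
          rw [hu, hv]
        · have hj : (k : ℕ) - i < n - i := by omega
          have := congrFun huv ⟨(k : ℕ) - i, hj⟩
          simp only at this
          have hkk : (⟨i + ((k : ℕ) - i), by omega⟩ : Fin n) = k := by
            apply Fin.ext
            simp
            omega
          rwa [hkk] at this
      calc cylCount (cyl w) n ≤ Nat.card (Fin (n - i) → Bool) :=
            Nat.card_le_card_of_injective _ hinj
        _ = 2 ^ (n - i) := by
            simp [Nat.card_eq_fintype_card]
    calc 2 ^ i * cylCount (cyl w) n ≤ 2 ^ i * 2 ^ (n - i) :=
          Nat.mul_le_mul_left _ hcard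
      _ = 2 ^ n := by rw [← pow_add]; congr 1; omega
  · have : cylCount (cyl w) n = 0 := by
      have : IsEmpty {u : Fin n → Bool // cyl (List.ofFn u) ⊆ cyl w} := by
        constructor
        intro u
        have := (cyl_subset_cyl u.2).1
        omega
      simp [cylCount, Nat.card_of_isEmpty]
    simp [this]

lemma not_MLRandom_of_computable {x : Cantor} (hx : Computable x) : ¬ MLRandom x := by
  intro hr
  have hinit : Computable fun i => initBits x i := by
    have := computable_map_range hx
    refine this.of_eq fun n => (initBits_eq_map x n).symm
  have hcomp : Computable₂ fun i (_ : ℕ) => Encodable.encode (initBits x i) + 1 :=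
    (Computable.succ.comp (Computable.encode.comp (hinit.comp Computable.fst))).to₂
  set T : MLTest :=
    { e := fun i _ => Encodable.encode (initBits x i) + 1
      comp := hcomp
      meas := by
        intro i
        have h1 : openOf (fun _ => Encodable.encode (initBits x i) + 1) = cyl (initBits x i) :=
          openOf_const_encode _
        show lebLe (openOf fun _ => Encodable.encode (initBits x i) + 1) i
        rw [h1]
        have := lebLe_cyl (initBits x i)
        rwa [length_initBits] at this } with hT
  obtain ⟨i, hi⟩ := hr T
  apply hi
  show x ∈ openOf (T.e i)
  have : T.e i = fun _ => Encodable.encode (initBits x i) + 1 := rfl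
  rw [this, openOf_const_encode]
  exact mem_cyl_initBits x i

/-! #### Uniqueness of named points -/

lemma repClosedNat_unique {p : Baire} {A B : Set ℕ}
    (hA : repClosedNat p A) (hB : repClosedNat p B) : A = B :=
  Set.ext fun n => (hA n).trans (hB n).symm

lemma repCantor_unique {p : Baire} {x y : Cantor}
    (hx : repCantor p x) (hy : repCantor p y) : x = y := by
  funext n
  have h1 := hx n
  have h2 := hy n
  rw [h1] at h2
  cases hxn : x n <;> cases hyn : y n <;> simp [hxn, hyn] at h2 ⊢

lemma repLAYin_unique {r : Baire} {a b : Set ℕ × Cantor}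
    (ha : repLAYin r a) (hb : repLAYin r b) : a = b :=
  Prod.ext (repClosedNat_unique ha.1 hb.1) (repCantor_unique ha.2 hb.2)

/-! #### The word functions for the positive reduction -/

def phiH : List ℕ → List ℕ := fun l => (List.range (l.length / 2)).map fun i => l.getD (2 * i) 0

def phiK : List ℕ → List ℕ :=
  fun l => (List.range (l.length - 1)).map fun j => if j % 2 = 0 then l.getD (j + 1) 0 else 1

lemma phiH_computable : Computable phiH := by
  have : Primrec phiH :=
    Primrec.list_map
      (Primrec.list_range.comp (Primrec.nat_div.comp Primrec.list_length (Primrec.const 2)))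
      (((Primrec.list_getD 0).comp Primrec.fst
        (Primrec.nat_mul.comp (Primrec.const 2) Primrec.snd)).to₂)
  exact this.to_comp

lemma phiK_computable : Computable phiK := by
  have : Primrec phiK :=
    Primrec.list_map
      (Primrec.list_range.comp (Primrec.nat_sub.comp Primrec.list_length (Primrec.const 1)))
      ((Primrec.ite (Primrec.eq.comp (Primrec.nat_mod.comp Primrec.snd (Primrec.const 2))
          (Primrec.const 0))
        ((Primrec.list_getD 0).comp Primrec.fst
          (Primrec.succ.comp Primrec.snd))
        (Primrec.const 1)).to₂)
  exact this.to_comp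

lemma phiH_mono : ∀ l l' : List ℕ, l <+: l' → phiH l <+: phiH l' := by
  intro l l' hl
  unfold phiH
  apply map_range_prefix _ _ (Nat.div_le_div_right hl.length_le)
  intro i hi
  have h2 : 2 * i < l.length := by omega
  rw [List.getD_eq_getElem _ _ h2, List.getD_eq_getElem _ _ (lt_of_lt_of_le h2 hl.length_le)]
  exact hl.getElem h2

lemma phiK_mono : ∀ l l' : List ℕ, l <+: l' → phiK l <+: phiK l' := by
  intro l l' hl
  unfold phiK
  apply map_range_prefix _ _ (by have := hl.length_le; omega)
  intro j hj
  have h2 : j + 1 < l.length := by omega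
  by_cases hjm : j % 2 = 0
  · rw [if_pos hjm, if_pos hjm, List.getD_eq_getElem _ _ h2,
      List.getD_eq_getElem _ _ (lt_of_lt_of_le h2 hl.length_le)]
    exact hl.getElem h2
  · rw [if_neg hjm, if_neg hjm]

lemma phiH_initSeg (p : Baire) (m : ℕ) :
    phiH (initSeg p m) = (List.range (m / 2)).map fun i => p (2 * i) := by
  unfold phiH
  rw [initSeg_length]
  apply List.map_congr_left
  intro i hi
  have : i < m / 2 := List.mem_range.1 hi
  exact initSeg_getD p (by omega)

lemma phiK_initSeg (r : Baire) (m : ℕ) :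
    phiK (initSeg r m) = (List.range (m - 1)).map fun j => if j % 2 = 0 then r (j + 1) else 1 := by
  unfold phiK
  rw [initSeg_length]
  apply List.map_congr_left
  intro j hj
  have : j < m - 1 := List.mem_range.1 hj
  by_cases hjm : j % 2 = 0
  · rw [if_pos hjm, if_pos hjm, initSeg_getD r (by omega)]
  · rw [if_neg hjm, if_neg hjm]

lemma prefixOfFun_map_range {f : ℕ → ℕ} {M : ℕ} {p : Baire}
    (h : ∀ i < M, f i = p i) : PrefixOfFun ((List.range M).map f) p := by
  intro i
  rw [get_map_range]
  exact h i (by simpa using i.2)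

def Kmap : Baire → Baire := fun r => pairB (odds r) fun _ => 1

lemma Kmap_apply (r : Baire) (j : ℕ) :
    Kmap r j = if j % 2 = 0 then r (j + 1) else 1 := by
  by_cases hjm : j % 2 = 0
  · rw [if_pos hjm]
    have hj : j = 2 * (j / 2) := by omega
    rw [hj]
    show pairB (odds r) (fun _ => 1) (2 * (j / 2)) = r (2 * (j / 2) + 1)
    rw [pairB_even]
    rfl
  · rw [if_neg hjm]
    have hj : j = 2 * (j / 2) + 1 := by omega
    rw [hj]
    show pairB (odds r) (fun _ => 1) (2 * (j / 2) + 1) = 1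
    rw [pairB_odd]

lemma Kmap_computableOn (D : Set Baire) : ComputableOn Kmap D := by
  refine ⟨phiK, phiK_computable, phiK_mono, fun r _ => ⟨?_, ?_⟩⟩
  · intro m
    rw [phiK_initSeg]
    apply prefixOfFun_map_range
    intro j hj
    rw [Kmap_apply]
  · intro n
    refine ⟨n + 1, ?_⟩
    rw [phiK_initSeg]
    simp

lemma evens_computableOn (D : Set Baire) : ComputableOn evens D := by
  refine ⟨phiH, phiH_computable, phiH_mono, fun p _ => ⟨?_, ?_⟩⟩
  · intro m
    rw [phiH_initSeg]
    apply prefixOfFun_map_range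
    intro i hi
    rfl
  · intro n
    refine ⟨2 * n, ?_⟩
    rw [phiH_initSeg]
    simp [Nat.mul_div_cancel_left]

/-! #### The positive reduction -/

lemma LAY_red_CN : WRed repLAYin repPairNat repClosedNat repNat LAY CN := by
  refine ⟨evens, Kmap, evens_computableOn _, ?_⟩
  intro G hG
  refine ⟨Kmap_computableOn _, ?_⟩
  rintro p ⟨A, x⟩ ⟨hA, hx⟩ hne
  obtain ⟨⟨a, b⟩, hab⟩ := hne
  have ha : a ∈ CN A := hab.1
  have hb : b ∈ dMLR x := hab.2
  obtain ⟨n, hn1, hn2⟩ := hG (evens p) A hA ⟨a, ha⟩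
  have hK : Kmap (pairB p (G (evens p))) = pairB (G (evens p)) fun _ => 1 := by
    unfold Kmap
    rw [odds_pairB]
  refine ⟨(n, 1), ⟨?_, ?_⟩, ?_⟩
  · show repNat (evens (Kmap (pairB p (G (evens p))))) n
    rw [hK, evens_pairB]
    exact hn1
  · show repNat (odds (Kmap (pairB p (G (evens p))))) 1
    rw [hK, odds_pairB]
    rfl
  · exact ⟨hn2, hb.1, rfl⟩

/-! #### The negative direction -/

lemma CN_not_red_LAY : ¬ WRed repClosedNat repNat repLAYin repPairNat CN LAY := by
  rintro ⟨H, K, hH, hmain⟩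
  classical
  -- the adversarial realizer
  set G : Baire → Baire := fun r =>
    if h : ∃ a, repLAYin r a ∧ (LAY a).Nonempty then
      pairB (fun _ => (h.choose_spec.2.choose).1) (fun _ => (h.choose_spec.2.choose).2)
    else fun _ => 0 with hGdef
  have hG : Realizes repLAYin repPairNat LAY G := by
    intro r a h1 h2
    have hex : ∃ a, repLAYin r a ∧ (LAY a).Nonempty := ⟨a, h1, h2⟩
    have heq : hex.choose = a := repLAYin_unique hex.choose_spec.1 h1
    refine ⟨hex.choose_spec.2.choose, ⟨?_, ?_⟩, ?_⟩
    · show repNat (evens (G r)) _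
      rw [hGdef]
      simp only [dif_pos hex]
      rw [evens_pairB]
      rfl
    · show repNat (odds (G r)) _
      rw [hGdef]
      simp only [dif_pos hex]
      rw [odds_pairB]
      rfl
    · show hex.choose_spec.2.choose ∈ LAY a
      rw [← heq]
      exact hex.choose_spec.2.choose_spec
  have hGc : ∀ r, ¬ (∃ a, repLAYin r a ∧ (LAY a).Nonempty) → G r = fun _ => 0 := by
    intro r hr
    rw [hGdef]
    exact dif_neg hr
  obtain ⟨⟨ψ, hψc, hψm, hψd⟩, hreal⟩ := hmain G hG
  set c : Baire := fun _ => 0 with hc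
  -- for computable names in the domain, `G (H p) = c`
  have hkey : ∀ p : Baire, Computable p → p ∈ domNames repClosedNat CN → G (H p) = c := by
    intro p hpc hpD
    apply hGc
    rintro ⟨⟨A, x⟩, ⟨-, hx⟩, hne⟩
    obtain ⟨⟨a, b⟩, hab⟩ := hne
    have hrand : MLRandom x := hab.2.1
    have hHp : Computable (H p) := computableOn_point hH hpc hpD
    have hxe : x = fun n => decide (H p (2 * n + 1) = 1) := by
      funext n
      have h1 : odds (H p) n = if x n then 1 else 0 := hx n
      show x n = decide (odds (H p) n = 1)
      rw [h1]
      cases x n <;> rfl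
    have hxc : Computable x := by
      rw [hxe]
      have h2 : Computable fun n => H p (2 * n + 1) :=
        hHp.comp (Primrec.to_comp (Primrec.succ.comp
          (Primrec.nat_mul.comp (Primrec.const 2) Primrec.id)))
      exact (Primrec.to_comp (PrimrecPred.decide (Primrec.eq.comp Primrec.id (Primrec.const 1)))).comp h2
    exact not_MLRandom_of_computable hxc hrand
  -- the two diagonal inputs
  set p0 : Baire := fun _ => 0 with hp0
  have hp0c : Computable p0 := Computable.const 0
  have hrep0 : repClosedNat p0 Set.univ := by
    intro n
    simp only [Set.mem_univ, true_iff]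
    rintro ⟨i, hi⟩
    simp [hp0] at hi
  have hp0D : p0 ∈ domNames repClosedNat CN := ⟨Set.univ, hrep0, ⟨0, trivial⟩⟩
  have hG0 : G (H p0) = c := hkey p0 hp0c hp0D
  have hmem0 : pairB p0 c ∈ {r | ∃ p ∈ domNames repClosedNat CN, r = pairB p (G (H p))} :=
    ⟨p0, hp0D, by rw [hG0]⟩
  obtain ⟨hpref0, htot0⟩ := hψd _ hmem0
  obtain ⟨M, hM⟩ := htot0 1
  have hM' : 0 < (ψ (initSeg (pairB p0 c) M)).length := hM
  set n0 : ℕ := (ψ (initSeg (pairB p0 c) M)).get ⟨0, hM'⟩ with hn0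
  -- second input
  set p1 : Baire := fun i => if i = M then n0 + 1 else 0 with hp1
  have hp1c : Computable p1 := by
    have : Primrec p1 :=
      Primrec.ite (Primrec.eq.comp Primrec.id (Primrec.const M))
        (Primrec.const (n0 + 1)) (Primrec.const 0)
    exact this.to_comp
  have hrep1 : repClosedNat p1 {n | n ≠ n0} := by
    intro n
    simp only [Set.mem_setOf_eq]
    constructor
    · rintro hn ⟨i, hi⟩
      simp only [hp1] at hi
      by_cases him : i = M
      · rw [if_pos him] at hi
        omega
      · rw [if_neg him] at hi
        omega
    · intro hn hne0
      exact hn ⟨M, by simp [hp1, hne0]⟩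
  have hp1D : p1 ∈ domNames repClosedNat CN := ⟨{n | n ≠ n0}, hrep1, ⟨n0 + 1, by simp [CN]⟩⟩
  have hG1 : G (H p1) = c := hkey p1 hp1c hp1D
  have hmem1 : pairB p1 c ∈ {r | ∃ p ∈ domNames repClosedNat CN, r = pairB p (G (H p))} :=
    ⟨p1, hp1D, by rw [hG1]⟩
  obtain ⟨hpref1, -⟩ := hψd _ hmem1
  -- the initial segments agree
  have hseg : initSeg (pairB p1 c) M = initSeg (pairB p0 c) M := by
    unfold initSeg
    apply List.map_congr_left
    intro k hk
    have hkM : k < M := List.mem_range.1 hk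
    simp only [pairB, hp1, hp0]
    have : k / 2 ≠ M := by omega
    rw [if_neg this]
  -- conclude
  have hKp1 : K (pairB p1 c) 0 = n0 := by
    have := hpref1 M
    rw [hseg] at this
    have h0 := this ⟨0, hM'⟩
    rw [hn0]
    exact h0.symm
  obtain ⟨n, hn1, hn2⟩ := hreal p1 {n | n ≠ n0} hrep1 ⟨n0 + 1, by simp [CN]⟩
  have hn1' : repNat (K (pairB p1 (G (H p1)))) n := hn1
  rw [hG1] at hn1' 
  have : n = n0 := by
    have : K (pairB p1 c) 0 = n := hn1' 
    rw [hKp1] at this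
    omega
  rw [this] at hn2
  exact hn2 rfl

end Aux

/-- `LAY <_W C_ℕ`: `C_ℕ × d_MLR` is Weihrauch reducible to closed choice on the
naturals, but not conversely. -/
theorem LAY_lt_CN :
    WRed repLAYin repPairNat repClosedNat repNat LAY CN ∧
    ¬ WRed repClosedNat repNat repLAYin repPairNat CN LAY := by
  exact ⟨LAY_red_CN, CN_not_red_LAY⟩

end WL
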